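/- Let N ≥ 1 be an integer, let a = (a₁,…,a_N) ∈ ℂ^N with Re(a_i) > 0 for every i, and let x ∈ ℂ be such that x ≠ −n·a for every n ∈ (ℤ_{≥0})^N ∖ {0}. Then the family indexed by n ∈ (ℤ_{≥0})^N ∖ {0} of terms log(1 + x/(n·a)) + ∑_{j=1}^{N} (−1)^j x^j / (j · (n·a)^j) is absolutely summable (with log the principal branch); consequently the Weierstrass product W(x, a) = ∏_{n ∈ (ℤ_{≥0})^N ∖ {0}} (1 + x/(n·a)) · exp(∑_{j=1}^{N} (−1)^j x^j/(j·(n·a)^j)) converges absolutely. -/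

import Mathlib

lemma pi_summable {g : ℕ → ℝ} (hg0 : ∀ k, 0 ≤ g k) (hg : Summable g) (N : ℕ) :
    Summable fun n : Fin N → ℕ => ∏ i, g (n i) := by
  induction N with
  | zero => exact .of_finite
  | succ N ih =>
    have h := hg.mul_of_nonneg ih hg0 fun n => Finset.prod_nonneg fun i _ => hg0 _
    rw [← (Fin.consEquiv fun _ : Fin (N + 1) => ℕ).summable_iff]
    convert h using 1
    funext p
    simp only [Function.comp, Fin.consEquiv_apply, Fin.prod_univ_succ, Fin.cons_zero,
      Fin.cons_succ]

lemma g_summable {N : ℕ} (hN : 1 ≤ N) :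
    Summable fun k : ℕ => ((k : ℝ) + 1) ^ (-(((N : ℝ) + 1) / N)) := by
  have hp : (1 : ℝ) < ((N : ℝ) + 1) / N := by
    rw [lt_div_iff₀ (by positivity)]
    linarith
  have h : Summable fun k : ℕ => ((k : ℝ)) ^ (-(((N : ℝ) + 1) / N)) :=
    Real.summable_nat_rpow.mpr (by linarith)
  have := (summable_nat_add_iff 1).mpr h
  convert this using 2 with k
  · rfl
  push_cast
  ring_nf

lemma key_bound {N : ℕ} (hN : 1 ≤ N) (n : Fin N → ℕ) (hS : 1 ≤ ∑ i, n i) :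
    (((∑ i, n i : ℕ) : ℝ))⁻¹ ^ (N + 1) ≤
      2 ^ (N + 1) * ∏ i, ((n i : ℝ) + 1) ^ (-(((N : ℝ) + 1) / N)) := by
  set p : ℝ := ((N : ℝ) + 1) / N with hp
  have hppos : 0 < p := by positivity
  set S : ℝ := ((∑ i, n i : ℕ) : ℝ) with hSdef
  have hS1 : 1 ≤ S := by rw [hSdef]; exact_mod_cast hS
  have hSpos : 0 < S := by linarith
  set P : ℝ := ∏ i, ((n i : ℝ) + 1) with hPdef
  have hPpos : 0 < P := Finset.prod_pos fun i _ => by positivity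
  have h1 : P ≤ (2 * S) ^ N := by
    have : (2 * S) ^ N = ∏ _i : Fin N, (2 * S) := by simp
    rw [this]
    refine Finset.prod_le_prod (fun i _ => by positivity) fun i _ => ?_
    have : (n i : ℝ) ≤ S := by
      rw [hSdef]
      exact_mod_cast Finset.single_le_sum (f := fun i => n i) (fun i _ => Nat.zero_le _)
        (Finset.mem_univ i)
    linarith
  have h2 : P ^ p ≤ (2 * S) ^ (N + 1) := by
    calc P ^ p ≤ ((2 * S) ^ N) ^ p :=
          Real.rpow_le_rpow hPpos.le h1 hppos.le
      _ = (2 * S) ^ ((N : ℝ) * p) := by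
          rw [Real.rpow_mul (by positivity), Real.rpow_natCast]
      _ = (2 * S) ^ ((N : ℝ) + 1) := by
          congr 1
          rw [hp]
          field_simp
      _ = (2 * S) ^ (N + 1) := by
          rw [← Real.rpow_natCast (2 * S) (N + 1)]
          push_cast
          ring_nf
  have hprod : ∏ i, ((n i : ℝ) + 1) ^ (-p) = (P ^ p)⁻¹ := by
    rw [← Real.rpow_neg hPpos.le, hPdef,
      ← Real.finset_prod_rpow _ _ (fun i _ => by positivity) (-p)]
  rw [hprod]
  have hPp : 0 < P ^ p := Real.rpow_pos_of_pos hPpos _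
  have h3 : ((2 * S) ^ (N + 1))⁻¹ ≤ (P ^ p)⁻¹ := inv_anti₀ hPp h2
  calc S⁻¹ ^ (N + 1) = 2 ^ (N + 1) * ((2 * S) ^ (N + 1))⁻¹ := by
        rw [mul_pow]
        field_simp
        rw [← mul_pow, one_div, inv_mul_cancel₀ hSpos.ne', one_pow]
    _ ≤ 2 ^ (N + 1) * (P ^ p)⁻¹ :=
        mul_le_mul_of_nonneg_left h3 (by positivity)

/-- (Convergence of the canonical Weierstrass product.)
Let `N ≥ 1`, let `a = (a₁,…,a_N) ∈ ℂᴺ` with `Re(aᵢ) > 0`, and let `x ∈ ℂ` with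
`x ≠ −n·a` for every `n ∈ (ℤ_{≥0})ᴺ ∖ {0}`.  Then the family of terms
`log(1 + x/(n·a)) + ∑_{j=1}^{N} (−1)ʲ xʲ/(j·(n·a)ʲ)`, indexed by
`n ∈ (ℤ_{≥0})ᴺ ∖ {0}`, is absolutely summable (with `log` the principal branch);
consequently the Weierstrass product
`W(x,a) = ∏_{n ≠ 0} (1 + x/(n·a)) · exp(∑_{j=1}^{N} (−1)ʲ xʲ/(j·(n·a)ʲ))`
converges absolutely (i.e. the family is multipliable). -/
theorem weierstrass_product_converges (N : ℕ) (hN : 1 ≤ N) (a : Fin N → ℂ)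
    (ha : ∀ i, 0 < (a i).re) (x : ℂ)
    (hx : ∀ n : Fin N → ℕ, n ≠ 0 → x ≠ -∑ i, (n i : ℂ) * a i) :
    (Summable fun n : {n : Fin N → ℕ // n ≠ 0} =>
        ‖Complex.log (1 + x / ∑ i, ((n : Fin N → ℕ) i : ℂ) * a i) +
          ∑ j ∈ Finset.Icc 1 N,
            (-1 : ℂ) ^ j * x ^ j / ((j : ℂ) * (∑ i, ((n : Fin N → ℕ) i : ℂ) * a i) ^ j)‖) ∧
    Multipliable fun n : {n : Fin N → ℕ // n ≠ 0} =>
      (1 + x / ∑ i, ((n : Fin N → ℕ) i : ℂ) * a i) *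
        Complex.exp (∑ j ∈ Finset.Icc 1 N,
          (-1 : ℂ) ^ j * x ^ j / ((j : ℂ) * (∑ i, ((n : Fin N → ℕ) i : ℂ) * a i) ^ j)) := by
  have hNe : Nonempty (Fin N) := ⟨⟨0, hN⟩⟩
  set p : ℝ := ((N : ℝ) + 1) / N with hp
  set c : ℝ := Finset.univ.inf' Finset.univ_nonempty fun i => (a i).re with hc
  have hcpos : 0 < c := (Finset.lt_inf'_iff _).mpr fun i _ => ha i
  -- lower bound on the norm of n·a
  have hre : ∀ n : Fin N → ℕ, (∑ i, (n i : ℂ) * a i).re = ∑ i, (n i : ℝ) * (a i).re := by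
    intro n
    rw [Complex.re_sum]
    exact Finset.sum_congr rfl fun i _ => by simp [Complex.mul_re]
  have hlow : ∀ n : Fin N → ℕ, c * ((∑ i, n i : ℕ) : ℝ) ≤ ‖∑ i, (n i : ℂ) * a i‖ := by
    intro n
    have h1 : c * ((∑ i, n i : ℕ) : ℝ) ≤ (∑ i, (n i : ℂ) * a i).re := by
      rw [hre]
      push_cast
      rw [Finset.mul_sum]
      refine Finset.sum_le_sum fun i _ => ?_
      have hci : c ≤ (a i).re := Finset.inf'_le _ (Finset.mem_univ i)
      have hni : (0 : ℝ) ≤ (n i : ℝ) := Nat.cast_nonneg _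
      nlinarith
    exact h1.trans (Complex.re_le_norm _)
  have hSpos : ∀ n : Fin N → ℕ, n ≠ 0 → 1 ≤ ∑ i, n i := by
    intro n hn
    obtain ⟨i, hi⟩ := Function.ne_iff.mp hn
    calc 1 ≤ n i := Nat.one_le_iff_ne_zero.mpr (by simpa using hi)
      _ ≤ ∑ i, n i := Finset.single_le_sum (fun _ _ => Nat.zero_le _) (Finset.mem_univ i)
  have hzne : ∀ n : Fin N → ℕ, n ≠ 0 → (∑ i, (n i : ℂ) * a i) ≠ 0 := by
    intro n hn h0
    have h1 := hlow n
    rw [h0, norm_zero] at h1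
    have h2 : (1 : ℝ) ≤ ((∑ i, n i : ℕ) : ℝ) := by exact_mod_cast hSpos n hn
    nlinarith
  have h1ne : ∀ n : Fin N → ℕ, n ≠ 0 → 1 + x / (∑ i, (n i : ℂ) * a i) ≠ 0 := by
    intro n hn h
    apply hx n hn
    have hz := hzne n hn
    field_simp at h
    linear_combination h
  -- the term equals log(1+w) - logTaylor (N+1) w  with w = x / (n·a)
  have hterm : ∀ n : Fin N → ℕ, n ≠ 0 →
      (∑ j ∈ Finset.Icc 1 N,
        (-1 : ℂ) ^ j * x ^ j / ((j : ℂ) * (∑ i, (n i : ℂ) * a i) ^ j)) =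
      - Complex.logTaylor (N + 1) (x / ∑ i, (n i : ℂ) * a i) := by
    intro n hn
    have hz := hzne n hn
    have hstep : ∀ j ∈ Finset.Icc 1 N,
        (-1 : ℂ) ^ j * x ^ j / ((j : ℂ) * (∑ i, (n i : ℂ) * a i) ^ j) =
        -((-1 : ℂ) ^ (j + 1) * (x / ∑ i, (n i : ℂ) * a i) ^ j / j) := by
      intro j hj
      have hjne : (j : ℂ) ≠ 0 := Nat.cast_ne_zero.mpr (by
        have := (Finset.mem_Icc.mp hj).1; omega)
      rw [div_pow]
      field_simp
      ring
    rw [Finset.sum_congr rfl hstep, Finset.sum_neg_distrib]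
    congr 1
    show _ = Complex.logTaylor (N + 1) _
    unfold Complex.logTaylor
    refine Finset.sum_subset (fun j hj => Finset.mem_range.mpr ?_) (fun j hjr hji => ?_)
    · have := (Finset.mem_Icc.mp hj).2; omega
    · have hj0 : j = 0 := by
        simp only [Finset.mem_range, Finset.mem_Icc, not_and, not_le] at hjr hji
        omega
      subst hj0
      simp
  -- the majorant
  have hgsum := g_summable hN
  have hg0 : ∀ k : ℕ, 0 ≤ ((k : ℝ) + 1) ^ (-p) := fun k => Real.rpow_nonneg (by positivity) _
  set K : ℝ := 2 * ‖x‖ ^ (N + 1) * c⁻¹ ^ (N + 1) * 2 ^ (N + 1) with hK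
  have hMsum : Summable fun n : {n : Fin N → ℕ // n ≠ 0} =>
      K * ∏ i, (((n : Fin N → ℕ) i : ℝ) + 1) ^ (-p) := by
    exact (((pi_summable hg0 hgsum N).subtype _).mul_left K)
  -- the pointwise bound, valid when 2‖x‖ ≤ c * S n
  have hbound : ∀ n : Fin N → ℕ, (hn : n ≠ 0) →
      2 * ‖x‖ ≤ c * ((∑ i, n i : ℕ) : ℝ) →
      ‖Complex.log (1 + x / ∑ i, (n i : ℂ) * a i) +
          ∑ j ∈ Finset.Icc 1 N,
            (-1 : ℂ) ^ j * x ^ j / ((j : ℂ) * (∑ i, (n i : ℂ) * a i) ^ j)‖ ≤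
        K * ∏ i, ((n i : ℝ) + 1) ^ (-p) := by
    intro n hn hcS
    set z : ℂ := ∑ i, (n i : ℂ) * a i with hzdef
    set S : ℝ := ((∑ i, n i : ℕ) : ℝ) with hSdef
    have hS1 : (1 : ℝ) ≤ S := by rw [hSdef]; exact_mod_cast hSpos n hn
    have hSpos' : 0 < S := by linarith
    have hcS' : 0 < c * S := by positivity
    have hzlow : c * S ≤ ‖z‖ := hlow n
    have hzpos : 0 < ‖z‖ := lt_of_lt_of_le hcS' hzlow
    set w : ℂ := x / z with hw
    have hwn : ‖w‖ ≤ ‖x‖ / (c * S) := by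
      rw [hw, norm_div]
      exact div_le_div_of_nonneg_left (norm_nonneg x) hcS' hzlow |>.trans_eq rfl
    have hwhalf : ‖w‖ ≤ 1 / 2 := by
      refine hwn.trans ?_
      rw [div_le_div_iff₀ hcS' two_pos]
      linarith
    have hwlt : ‖w‖ < 1 := by linarith
    rw [hterm n hn, ← sub_eq_add_neg]
    have hlog := Complex.norm_log_sub_logTaylor_le N hwlt
    have hstep1 : ‖w‖ ^ (N + 1) * (1 - ‖w‖)⁻¹ / (N + 1) ≤ 2 * ‖w‖ ^ (N + 1) := by
      have h1 : (1 - ‖w‖)⁻¹ ≤ 2 := by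
        rw [inv_le_comm₀ (by linarith) two_pos]
        linarith
      have h2 : (1 : ℝ) ≤ (N : ℝ) + 1 := by
        have : (0:ℝ) ≤ (N:ℝ) := Nat.cast_nonneg _
        linarith
      have h3 : 0 ≤ ‖w‖ ^ (N + 1) := by positivity
      calc ‖w‖ ^ (N + 1) * (1 - ‖w‖)⁻¹ / ((N : ℝ) + 1)
          ≤ ‖w‖ ^ (N + 1) * 2 / 1 := by
            apply div_le_div₀ (by positivity) (by nlinarith) one_pos h2
        _ = 2 * ‖w‖ ^ (N + 1) := by ring
    have hstep2 : ‖w‖ ^ (N + 1) ≤ (‖x‖ * (c⁻¹ * S⁻¹)) ^ (N + 1) := by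
      apply pow_le_pow_left₀ (norm_nonneg w)
      refine hwn.trans_eq ?_
      field_simp
    have hstep3 : S⁻¹ ^ (N + 1) ≤ 2 ^ (N + 1) * ∏ i, ((n i : ℝ) + 1) ^ (-p) := by
      rw [hSdef]
      exact key_bound hN n (hSpos n hn)
    calc ‖Complex.log (1 + w) - Complex.logTaylor (N + 1) w‖
        ≤ ‖w‖ ^ (N + 1) * (1 - ‖w‖)⁻¹ / (N + 1) := hlog
      _ ≤ 2 * ‖w‖ ^ (N + 1) := hstep1
      _ ≤ 2 * (‖x‖ * (c⁻¹ * S⁻¹)) ^ (N + 1) := by linarith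
      _ = 2 * ‖x‖ ^ (N + 1) * c⁻¹ ^ (N + 1) * S⁻¹ ^ (N + 1) := by ring
      _ ≤ 2 * ‖x‖ ^ (N + 1) * c⁻¹ ^ (N + 1) *
            (2 ^ (N + 1) * ∏ i, ((n i : ℝ) + 1) ^ (-p)) := by
          apply mul_le_mul_of_nonneg_left hstep3 (by positivity)
      _ = K * ∏ i, ((n i : ℝ) + 1) ^ (-p) := by rw [hK]; ring
  -- eventual bound in the cofinite filter
  have hev : ∀ᶠ n : {n : Fin N → ℕ // n ≠ 0} in Filter.cofinite,
      ‖Complex.log (1 + x / ∑ i, ((n : Fin N → ℕ) i : ℂ) * a i) +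
          ∑ j ∈ Finset.Icc 1 N,
            (-1 : ℂ) ^ j * x ^ j / ((j : ℂ) * (∑ i, ((n : Fin N → ℕ) i : ℂ) * a i) ^ j)‖ ≤
        K * ∏ i, (((n : Fin N → ℕ) i : ℝ) + 1) ^ (-p) := by
    rw [Filter.eventually_cofinite]
    set T : ℕ := ⌈2 * ‖x‖ / c⌉₊ with hT
    have hGfin : {n : {n : Fin N → ℕ // n ≠ 0} | ∑ i, (n : Fin N → ℕ) i ≤ T}.Finite := by
      have hfin : {n : Fin N → ℕ | ∑ i, n i ≤ T}.Finite := by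
        refine (Set.finite_Icc (0 : Fin N → ℕ) (fun _ => T)).subset fun n hn => ?_
        refine ⟨fun i => Nat.zero_le _, fun i => ?_⟩
        exact le_trans (Finset.single_le_sum (fun _ _ => Nat.zero_le _) (Finset.mem_univ i)) hn
      exact hfin.preimage (Subtype.coe_injective.injOn)
    refine hGfin.subset fun n hn => ?_
    simp only [Set.mem_setOf_eq, not_le] at hn ⊢
    by_contra hTn
    push_neg at hTn
    refine hn.not_ge (hbound _ n.2 ?_)
    have h1 : 2 * ‖x‖ / c ≤ (T : ℝ) := Nat.le_ceil _
    have h2 : (T : ℝ) ≤ ((∑ i, (n : Fin N → ℕ) i : ℕ) : ℝ) := by exact_mod_cast hTn.le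
    rw [div_le_iff₀ hcpos] at h1
    calc 2 * ‖x‖ ≤ (T : ℝ) * c := h1
      _ ≤ ((∑ i, (n : Fin N → ℕ) i : ℕ) : ℝ) * c := by nlinarith [hcpos.le]
      _ = c * ((∑ i, (n : Fin N → ℕ) i : ℕ) : ℝ) := by ring
  have hsumnorm : Summable fun n : {n : Fin N → ℕ // n ≠ 0} =>
      ‖Complex.log (1 + x / ∑ i, ((n : Fin N → ℕ) i : ℂ) * a i) +
          ∑ j ∈ Finset.Icc 1 N,
            (-1 : ℂ) ^ j * x ^ j / ((j : ℂ) * (∑ i, ((n : Fin N → ℕ) i : ℂ) * a i) ^ j)‖ := by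
    refine Summable.of_norm_bounded_eventually hMsum ?_
    filter_upwards [hev] with n h
    rwa [norm_norm]
  refine ⟨hsumnorm, ?_⟩
  have hsum : Summable fun n : {n : Fin N → ℕ // n ≠ 0} =>
      Complex.log (1 + x / ∑ i, ((n : Fin N → ℕ) i : ℂ) * a i) +
        ∑ j ∈ Finset.Icc 1 N,
          (-1 : ℂ) ^ j * x ^ j / ((j : ℂ) * (∑ i, ((n : Fin N → ℕ) i : ℂ) * a i) ^ j) :=
    Summable.of_norm hsumnorm
  have hprod := hsum.hasSum.cexp
  have heq : (fun n : {n : Fin N → ℕ // n ≠ 0} =>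
      (1 + x / ∑ i, ((n : Fin N → ℕ) i : ℂ) * a i) *
        Complex.exp (∑ j ∈ Finset.Icc 1 N,
          (-1 : ℂ) ^ j * x ^ j / ((j : ℂ) * (∑ i, ((n : Fin N → ℕ) i : ℂ) * a i) ^ j))) =
      Complex.exp ∘ (fun n : {n : Fin N → ℕ // n ≠ 0} =>
        Complex.log (1 + x / ∑ i, ((n : Fin N → ℕ) i : ℂ) * a i) +
          ∑ j ∈ Finset.Icc 1 N,
            (-1 : ℂ) ^ j * x ^ j / ((j : ℂ) * (∑ i, ((n : Fin N → ℕ) i : ℂ) * a i) ^ j)) := by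
    funext n
    simp only [Function.comp]
    rw [Complex.exp_add, Complex.exp_log (h1ne n n.2)]
  rw [heq]
  exact hprod.multipliable
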